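/- The combinatorial neural code D_1 = {{1,2,3}, {2,3,4}, {3,4,5}, {1,4,5}, {1,2,5}, {1,2}, {2,3}, {3,4}, {4,5}, {1,5}, ∅} on 5 neurons has no closed convex realization: for every d ≥ 1 there do not exist closed convex sets U_1, …, U_5 ⊆ ℝ^d with code(U, ℝ^d) = D_1. -/

import Mathlib

/-- The atom of a subset `σ` of neurons with respect to a family of sets `U`:
`A_σ = (⋂_{i ∈ σ} U_i) \ (⋃_{j ∉ σ} U_j)`. -/
def atomOf {n : ℕ} {X : Type*} (U : Fin n → Set X) (σ : Set (Fin n)) : Set X :=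
  (⋂ i ∈ σ, U i) \ (⋃ j ∈ σᶜ, U j)

/-- The combinatorial code of a family of sets: the collection of subsets with
nonempty atom. -/
def codeOf {n : ℕ} {X : Type*} (U : Fin n → Set X) : Set (Set (Fin n)) :=
  {σ | (atomOf U σ).Nonempty}

/-- The code `D₁ = {123, 234, 345, 145, 125, 12, 23, 34, 45, 15, ∅}` on five neurons,
written with neurons `1,…,5` encoded as `0,…,4 : Fin 5`. -/
def D1 : Set (Set (Fin 5)) :=
  {{0, 1, 2}, {1, 2, 3}, {2, 3, 4}, {0, 3, 4}, {0, 1, 4},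
   {0, 1}, {1, 2}, {2, 3}, {3, 4}, {0, 4}, ∅}

section CodeFacts
variable {X : Type*} {U : Fin 5 → Set X}

lemma mem_D1_elim {σ : Set (Fin 5)} (h : σ ∈ D1) :
    σ = {0,1,2} ∨ σ = {1,2,3} ∨ σ = {2,3,4} ∨ σ = {0,3,4} ∨ σ = {0,1,4} ∨
    σ = {0,1} ∨ σ = {1,2} ∨ σ = {2,3} ∨ σ = {3,4} ∨ σ = {0,4} ∨ σ = ∅ := by
  simpa [D1] using h

lemma cw_mem (hD : codeOf U = D1) (p : X) : {i | p ∈ U i} ∈ D1 := by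
  rw [← hD]
  refine ⟨p, ?_, ?_⟩
  · simp only [Set.mem_iInter]; intro i hi; exact hi
  · simp only [Set.mem_iUnion]; rintro ⟨j, hj, hpj⟩; exact hj hpj

lemma bad013 (hD : codeOf U = D1) {p : X} (ha : p ∈ U 0) (hb : p ∈ U 1) (hc : p ∈ U 3) :
    False := by
  have ma : (0:Fin 5) ∈ {i | p ∈ U i} := ha
  have mb : (1:Fin 5) ∈ {i | p ∈ U i} := hb
  have mc : (3:Fin 5) ∈ {i | p ∈ U i} := hc
  rcases mem_D1_elim (cw_mem hD p) with h|h|h|h|h|h|h|h|h|h|h <;>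
    rw [h] at ma mb mc <;> simp_all

lemma bad023 (hD : codeOf U = D1) {p : X} (ha : p ∈ U 0) (hb : p ∈ U 2) (hc : p ∈ U 3) :
    False := by
  have ma : (0:Fin 5) ∈ {i | p ∈ U i} := ha
  have mb : (2:Fin 5) ∈ {i | p ∈ U i} := hb
  have mc : (3:Fin 5) ∈ {i | p ∈ U i} := hc
  rcases mem_D1_elim (cw_mem hD p) with h|h|h|h|h|h|h|h|h|h|h <;>
    rw [h] at ma mb mc <;> simp_all

lemma bad124 (hD : codeOf U = D1) {p : X} (ha : p ∈ U 1) (hb : p ∈ U 2) (hc : p ∈ U 4) :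
    False := by
  have ma : (1:Fin 5) ∈ {i | p ∈ U i} := ha
  have mb : (2:Fin 5) ∈ {i | p ∈ U i} := hb
  have mc : (4:Fin 5) ∈ {i | p ∈ U i} := hc
  rcases mem_D1_elim (cw_mem hD p) with h|h|h|h|h|h|h|h|h|h|h <;>
    rw [h] at ma mb mc <;> simp_all

lemma bad134 (hD : codeOf U = D1) {p : X} (ha : p ∈ U 1) (hb : p ∈ U 3) (hc : p ∈ U 4) :
    False := by
  have ma : (1:Fin 5) ∈ {i | p ∈ U i} := ha
  have mb : (3:Fin 5) ∈ {i | p ∈ U i} := hb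
  have mc : (4:Fin 5) ∈ {i | p ∈ U i} := hc
  rcases mem_D1_elim (cw_mem hD p) with h|h|h|h|h|h|h|h|h|h|h <;>
    rw [h] at ma mb mc <;> simp_all

lemma bad024 (hD : codeOf U = D1) {p : X} (ha : p ∈ U 0) (hb : p ∈ U 2) (hc : p ∈ U 4) :
    False := by
  have ma : (0:Fin 5) ∈ {i | p ∈ U i} := ha
  have mb : (2:Fin 5) ∈ {i | p ∈ U i} := hb
  have mc : (4:Fin 5) ∈ {i | p ∈ U i} := hc
  rcases mem_D1_elim (cw_mem hD p) with h|h|h|h|h|h|h|h|h|h|h <;>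
    rw [h] at ma mb mc <;> simp_all

lemma sub1 (hD : codeOf U = D1) {p : X} (hp : p ∈ U 1) : p ∈ U 0 ∨ p ∈ U 2 := by
  have m : (1:Fin 5) ∈ {i | p ∈ U i} := hp
  rcases mem_D1_elim (cw_mem hD p) with h|h|h|h|h|h|h|h|h|h|h <;>
    rw [h] at m <;>
    first
    | (left
       have : (0:Fin 5) ∈ {i | p ∈ U i} := by rw [h]; simp
       exact this)
    | (right
       have : (2:Fin 5) ∈ {i | p ∈ U i} := by rw [h]; simp
       exact this)
    | simp at m

lemma sub2 (hD : codeOf U = D1) {p : X} (hp : p ∈ U 2) : p ∈ U 1 ∨ p ∈ U 3 := by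
  have m : (2:Fin 5) ∈ {i | p ∈ U i} := hp
  rcases mem_D1_elim (cw_mem hD p) with h|h|h|h|h|h|h|h|h|h|h <;>
    rw [h] at m <;>
    first
    | (left
       have : (1:Fin 5) ∈ {i | p ∈ U i} := by rw [h]; simp
       exact this)
    | (right
       have : (3:Fin 5) ∈ {i | p ∈ U i} := by rw [h]; simp
       exact this)
    | simp at m

lemma sub3 (hD : codeOf U = D1) {p : X} (hp : p ∈ U 3) : p ∈ U 2 ∨ p ∈ U 4 := by
  have m : (3:Fin 5) ∈ {i | p ∈ U i} := hp
  rcases mem_D1_elim (cw_mem hD p) with h|h|h|h|h|h|h|h|h|h|h <;>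
    rw [h] at m <;>
    first
    | (left
       have : (2:Fin 5) ∈ {i | p ∈ U i} := by rw [h]; simp
       exact this)
    | (right
       have : (4:Fin 5) ∈ {i | p ∈ U i} := by rw [h]; simp
       exact this)
    | simp at m

lemma sub4 (hD : codeOf U = D1) {p : X} (hp : p ∈ U 4) : p ∈ U 3 ∨ p ∈ U 0 := by
  have m : (4:Fin 5) ∈ {i | p ∈ U i} := hp
  rcases mem_D1_elim (cw_mem hD p) with h|h|h|h|h|h|h|h|h|h|h <;>
    rw [h] at m <;>
    first
    | (left
       have : (3:Fin 5) ∈ {i | p ∈ U i} := by rw [h]; simp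
       exact this)
    | (right
       have : (0:Fin 5) ∈ {i | p ∈ U i} := by rw [h]; simp
       exact this)
    | simp at m

lemma pt_mem (hD : codeOf U = D1) (σ : Set (Fin 5)) (hσ : σ ∈ D1) :
    ∃ p, ∀ i ∈ σ, p ∈ U i := by
  rw [← hD] at hσ
  obtain ⟨p, hp, -⟩ := hσ
  exact ⟨p, by simpa [Set.mem_iInter] using hp⟩

end CodeFacts

section Main
variable {E : Type*} [NormedAddCommGroup E] [InnerProductSpace ℝ E]

lemma blocking {A B : Set E} (hA : IsClosed A) (hB : IsClosed B) {x y : E}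
    (hx : x ∈ A) (hy : y ∈ B) (hcov : segment ℝ x y ⊆ A ∪ B) :
    ∃ z ∈ segment ℝ x y, z ∈ A ∩ B := by
  obtain ⟨z, hz1, hz2⟩ := isPreconnected_closed_iff.mp
    (convex_segment x y).isPreconnected A B hA hB hcov
    ⟨x, left_mem_segment ℝ x y, hx⟩ ⟨y, right_mem_segment ℝ x y, hy⟩
  exact ⟨z, hz1, hz2⟩

theorem no_closed_realization (U : Fin 5 → Set E) (hconv : ∀ i, Convex ℝ (U i))
    (hclosed : ∀ i, IsClosed (U i)) (hD : codeOf U = D1) : False := by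
  classical
  -- points in the five triple atoms
  obtain ⟨p0, hp0⟩ := pt_mem hD {0,1,4} (by simp [D1])
  obtain ⟨p1, hp1⟩ := pt_mem hD {0,1,2} (by simp [D1])
  obtain ⟨p2, hp2⟩ := pt_mem hD {1,2,3} (by simp [D1])
  obtain ⟨p3, hp3⟩ := pt_mem hD {2,3,4} (by simp [D1])
  obtain ⟨p4, hp4⟩ := pt_mem hD {0,3,4} (by simp [D1])
  have hp0T : p0 ∈ U 4 ∩ U 1 := ⟨hp0 4 (by simp), hp0 1 (by simp)⟩
  have hp1T : p1 ∈ U 0 ∩ U 2 := ⟨hp1 0 (by simp), hp1 2 (by simp)⟩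
  have hp2T : p2 ∈ U 1 ∩ U 3 := ⟨hp2 1 (by simp), hp2 3 (by simp)⟩
  have hp3T : p3 ∈ U 2 ∩ U 4 := ⟨hp3 2 (by simp), hp3 4 (by simp)⟩
  have hp4T : p4 ∈ U 3 ∩ U 0 := ⟨hp4 3 (by simp), hp4 0 (by simp)⟩
  -- compact convex hull
  set K : Set E := convexHull ℝ {p0, p1, p2, p3, p4} with hK
  have hKcp : IsCompact K := (Set.toFinite _).isCompact_convexHull ℝ
  have hKconv : Convex ℝ K := convex_convexHull ℝ _
  have hpK : ∀ q ∈ ({p0, p1, p2, p3, p4} : Set E), q ∈ K := fun q hq => subset_convexHull ℝ _ hq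
  -- the compact pieces
  set S0 : Set E := (U 4 ∩ U 1) ∩ K with hS0
  set S1 : Set E := (U 0 ∩ U 2) ∩ K with hS1
  set S2 : Set E := (U 1 ∩ U 3) ∩ K with hS2
  set S3 : Set E := (U 2 ∩ U 4) ∩ K with hS3
  set S4 : Set E := (U 3 ∩ U 0) ∩ K with hS4
  have cS0 : IsCompact S0 := hKcp.inter_left ((hclosed 4).inter (hclosed 1))
  have cS1 : IsCompact S1 := hKcp.inter_left ((hclosed 0).inter (hclosed 2))
  have cS2 : IsCompact S2 := hKcp.inter_left ((hclosed 1).inter (hclosed 3))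
  have cS3 : IsCompact S3 := hKcp.inter_left ((hclosed 2).inter (hclosed 4))
  have cS4 : IsCompact S4 := hKcp.inter_left ((hclosed 3).inter (hclosed 0))
  set S : Set (E × E × E × E × E) := S0 ×ˢ (S1 ×ˢ (S2 ×ˢ (S3 ×ˢ S4))) with hSdef
  have hScp : IsCompact S := cS0.prod (cS1.prod (cS2.prod (cS3.prod cS4)))
  have hSne : S.Nonempty :=
    ⟨(p0, p1, p2, p3, p4), ⟨hp0T, hpK _ (by simp)⟩, ⟨hp1T, hpK _ (by simp)⟩,
      ⟨hp2T, hpK _ (by simp)⟩, ⟨hp3T, hpK _ (by simp)⟩, ⟨hp4T, hpK _ (by simp)⟩⟩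
  obtain ⟨m, hmS, hmin⟩ := hScp.exists_isMinOn hSne
    (Continuous.continuousOn (f := fun q : E × E × E × E × E =>
      dist q.1 q.2.1 + dist q.2.1 q.2.2.1 + dist q.2.2.1 q.2.2.2.1 +
      dist q.2.2.2.1 q.2.2.2.2 + dist q.2.2.2.2 q.1) (by fun_prop))
  obtain ⟨x0, x1, x2, x3, x4⟩ := m
  obtain ⟨hx0S, hx1S, hx2S, hx3S, hx4S⟩ := hmS
  have hx0T : x0 ∈ U 4 ∩ U 1 := hx0S.1
  have hx1T : x1 ∈ U 0 ∩ U 2 := hx1S.1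
  have hx2T : x2 ∈ U 1 ∩ U 3 := hx2S.1
  have hx3T : x3 ∈ U 2 ∩ U 4 := hx3S.1
  have hx4T : x4 ∈ U 3 ∩ U 0 := hx4S.1
  -- betweenness at index 1 : x1 ∈ [x0, x2]
  have hseg1 : x1 ∈ segment ℝ x0 x2 := by
    have cov : segment ℝ x0 x2 ⊆ U 0 ∪ U 2 := fun w hw =>
      sub1 hD ((hconv 1).segment_subset hx0T.2 hx2T.1 hw)
    have hx0U : x0 ∈ U 0 :=
      (sub1 hD hx0T.2).resolve_right fun h => bad124 hD hx0T.2 h hx0T.1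
    have hx2U : x2 ∈ U 2 :=
      (sub1 hD hx2T.1).resolve_left fun h => bad013 hD h hx2T.1 hx2T.2
    obtain ⟨z, hzseg, hzT⟩ := blocking (hclosed 0) (hclosed 2) hx0U hx2U cov
    have hzK : z ∈ K := hKconv.segment_subset hx0S.2 hx2S.2 hzseg
    have hle := isMinOn_iff.mp hmin (x0, z, x2, x3, x4)
      ⟨hx0S, ⟨hzT, hzK⟩, hx2S, hx3S, hx4S⟩
    dsimp only at hle
    have e1 : dist x0 z + dist z x2 = dist x0 x2 := dist_add_dist_of_mem_segment hzseg
    have tri : dist x0 x2 ≤ dist x0 x1 + dist x1 x2 := dist_triangle _ _ _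
    exact mem_segment_iff_wbtw.mpr (dist_add_dist_eq_iff.mp (by linarith))
  -- betweenness at index 2 : x2 ∈ [x1, x3]
  have hseg2 : x2 ∈ segment ℝ x1 x3 := by
    have cov : segment ℝ x1 x3 ⊆ U 1 ∪ U 3 := fun w hw =>
      sub2 hD ((hconv 2).segment_subset hx1T.2 hx3T.1 hw)
    have hx1U : x1 ∈ U 1 :=
      (sub2 hD hx1T.2).resolve_right fun h => bad023 hD hx1T.1 hx1T.2 h
    have hx3U : x3 ∈ U 3 :=
      (sub2 hD hx3T.1).resolve_left fun h => bad124 hD h hx3T.1 hx3T.2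
    obtain ⟨z, hzseg, hzT⟩ := blocking (hclosed 1) (hclosed 3) hx1U hx3U cov
    have hzK : z ∈ K := hKconv.segment_subset hx1S.2 hx3S.2 hzseg
    have hle := isMinOn_iff.mp hmin (x0, x1, z, x3, x4)
      ⟨hx0S, hx1S, ⟨hzT, hzK⟩, hx3S, hx4S⟩
    dsimp only at hle
    have e1 : dist x1 z + dist z x3 = dist x1 x3 := dist_add_dist_of_mem_segment hzseg
    have tri : dist x1 x3 ≤ dist x1 x2 + dist x2 x3 := dist_triangle _ _ _
    exact mem_segment_iff_wbtw.mpr (dist_add_dist_eq_iff.mp (by linarith))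
  -- betweenness at index 3 : x3 ∈ [x2, x4]
  have hseg3 : x3 ∈ segment ℝ x2 x4 := by
    have cov : segment ℝ x2 x4 ⊆ U 2 ∪ U 4 := fun w hw =>
      sub3 hD ((hconv 3).segment_subset hx2T.2 hx4T.1 hw)
    have hx2U : x2 ∈ U 2 :=
      (sub3 hD hx2T.2).resolve_right fun h => bad134 hD hx2T.1 hx2T.2 h
    have hx4U : x4 ∈ U 4 :=
      (sub3 hD hx4T.1).resolve_left fun h => bad023 hD hx4T.2 h hx4T.1
    obtain ⟨z, hzseg, hzT⟩ := blocking (hclosed 2) (hclosed 4) hx2U hx4U cov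
    have hzK : z ∈ K := hKconv.segment_subset hx2S.2 hx4S.2 hzseg
    have hle := isMinOn_iff.mp hmin (x0, x1, x2, z, x4)
      ⟨hx0S, hx1S, hx2S, ⟨hzT, hzK⟩, hx4S⟩
    dsimp only at hle
    have e1 : dist x2 z + dist z x4 = dist x2 x4 := dist_add_dist_of_mem_segment hzseg
    have tri : dist x2 x4 ≤ dist x2 x3 + dist x3 x4 := dist_triangle _ _ _
    exact mem_segment_iff_wbtw.mpr (dist_add_dist_eq_iff.mp (by linarith))
  -- betweenness at index 4 : x4 ∈ [x3, x0]
  have hseg4 : x4 ∈ segment ℝ x3 x0 := by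
    have cov : segment ℝ x3 x0 ⊆ U 3 ∪ U 0 := fun w hw =>
      sub4 hD ((hconv 4).segment_subset hx3T.2 hx0T.1 hw)
    have hx3U : x3 ∈ U 3 :=
      (sub4 hD hx3T.2).resolve_right fun h => bad024 hD h hx3T.1 hx3T.2
    have hx0U : x0 ∈ U 0 :=
      (sub4 hD hx0T.1).resolve_left fun h => bad134 hD hx0T.2 h hx0T.1
    obtain ⟨z, hzseg, hzT⟩ := blocking (hclosed 3) (hclosed 0) hx3U hx0U cov
    have hzK : z ∈ K := hKconv.segment_subset hx3S.2 hx0S.2 hzseg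
    have hle := isMinOn_iff.mp hmin (x0, x1, x2, x3, z)
      ⟨hx0S, hx1S, hx2S, hx3S, ⟨hzT, hzK⟩⟩
    dsimp only at hle
    have e1 : dist x3 z + dist z x0 = dist x3 x0 := dist_add_dist_of_mem_segment hzseg
    have tri : dist x3 x0 ≤ dist x3 x4 + dist x4 x0 := dist_triangle _ _ _
    exact mem_segment_iff_wbtw.mpr (dist_add_dist_eq_iff.mp (by linarith))
  -- distinctness of consecutive points
  have ne01 : x0 ≠ x1 := fun h =>
    bad124 hD hx0T.2 (by rw [h]; exact hx1T.2) hx0T.1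
  have ne12 : x1 ≠ x2 := fun h =>
    bad013 hD hx1T.1 (by rw [h]; exact hx2T.1) (by rw [h]; exact hx2T.2)
  have ne23 : x2 ≠ x3 := fun h =>
    bad124 hD hx2T.1 (by rw [h]; exact hx3T.1) (by rw [h]; exact hx3T.2)
  have ne34 : x3 ≠ x4 := fun h =>
    bad023 hD (by rw [h]; exact hx4T.2) hx3T.1 (by rw [h]; exact hx4T.1)
  -- now the pure affine-algebra contradiction
  obtain ⟨a1, b1, ha1, hb1, hab1, hc1⟩ := hseg1
  obtain ⟨a2, b2, ha2, hb2, hab2, hc2⟩ := hseg2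
  obtain ⟨a3, b3, ha3, hb3, hab3, hc3⟩ := hseg3
  obtain ⟨a4, b4, ha4, hb4, hab4, hc4⟩ := hseg4
  set v : E := x1 - x0 with hv
  have hvne : v ≠ 0 := sub_ne_zero_of_ne (Ne.symm ne01)
  -- b1 > 0
  have hb1pos : 0 < b1 := by
    rcases hb1.lt_or_eq with h | h
    · exact h
    · exfalso
      apply ne01
      have ha1' : a1 = 1 := by linarith
      rw [← hc1, ha1', ← h, one_smul, zero_smul, add_zero]
  -- x2 - x0 = t2 • v
  have key2 : b1 • (x2 - x0) = v := by
    have ha1' : a1 = 1 - b1 := by linarith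
    rw [ha1'] at hc1
    calc b1 • (x2 - x0) = ((1 - b1) • x0 + b1 • x2) - x0 := by
          rw [smul_sub, sub_smul, one_smul]; abel
      _ = v := by rw [hc1]
  set t2 : ℝ := b1⁻¹ with ht2
  have hx2v : x2 - x0 = t2 • v := by
    rw [← key2, ht2, inv_smul_smul₀ (ne_of_gt hb1pos)]
  have hb1le : b1 ≤ 1 := by linarith
  have ht2ge : 1 ≤ t2 := by
    rw [ht2]
    exact (one_le_inv_iff₀.mpr ⟨hb1pos, hb1le⟩)
  have ht2gt : 1 < t2 := by
    rcases ht2ge.lt_or_eq with h | h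
    · exact h
    · exfalso
      apply ne12
      have : x2 - x0 = v := by rw [hx2v, ← h, one_smul]
      have h2 : x2 - x0 = x1 - x0 := this
      have := sub_left_inj.mp h2
      exact this.symm
  -- b2, a2 > 0
  have hb2pos : 0 < b2 := by
    rcases hb2.lt_or_eq with h | h
    · exact h
    · exfalso
      apply ne12
      have ha2' : a2 = 1 := by linarith
      rw [← hc2, ha2', ← h, one_smul, zero_smul, add_zero]
  have ha2pos : 0 < a2 := by
    rcases ha2.lt_or_eq with h | h
    · exact h
    · exfalso
      apply ne23
      have hb2' : b2 = 1 := by linarith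
      rw [← hc2, hb2', ← h, one_smul, zero_smul, zero_add]
  -- x3 - x0 = t3 • v
  have key3 : b2 • (x3 - x0) = (x2 - x0) - a2 • v := by
    calc b2 • (x3 - x0)
        = ((a2 • x1 + b2 • x3) - x0 - a2 • (x1 - x0)) - (a2 + b2 - 1) • x0 := by
          rw [smul_sub, smul_sub, sub_smul, add_smul, one_smul]; abel
      _ = (x2 - x0) - a2 • v := by rw [hc2, hab2, sub_self, zero_smul, sub_zero, hv]
  set t3 : ℝ := b2⁻¹ * (t2 - a2) with ht3
  have hx3v : x3 - x0 = t3 • v := by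
    have h5 : b2 • (x3 - x0) = (t2 - a2) • v := by
      rw [key3, hx2v, sub_smul]
    have := congrArg (fun w => b2⁻¹ • w) h5
    simpa [ht3, smul_smul, inv_smul_smul₀ (ne_of_gt hb2pos)] using this
  have hb2t3 : b2 * t3 = t2 - a2 := by
    rw [ht3, ← mul_assoc, mul_inv_cancel₀ (ne_of_gt hb2pos), one_mul]
  have ht3gt1 : 1 < t3 := by
    have h1 : b2 * (t3 - 1) = t2 - 1 := by linear_combination hb2t3 - hab2
    by_contra hcon
    push_neg at hcon
    have : b2 * (t3 - 1) ≤ 0 :=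
      mul_nonpos_of_nonneg_of_nonpos (le_of_lt hb2pos) (by linarith)
    linarith
  have ht3t2 : t2 < t3 := by
    have h2 : t3 - t2 = a2 * (t3 - 1) := by linear_combination hb2t3 - t3 * hab2
    have := mul_pos ha2pos (by linarith : (0:ℝ) < t3 - 1)
    linarith
  -- b3, a3 > 0
  have hb3pos : 0 < b3 := by
    rcases hb3.lt_or_eq with h | h
    · exact h
    · exfalso
      apply ne23
      have ha3' : a3 = 1 := by linarith
      rw [← hc3, ha3', ← h, one_smul, zero_smul, add_zero]
  have ha3pos : 0 < a3 := by
    rcases ha3.lt_or_eq with h | h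
    · exact h
    · exfalso
      apply ne34
      have hb3' : b3 = 1 := by linarith
      rw [← hc3, hb3', ← h, one_smul, zero_smul, zero_add]
  -- x4 - x0 = t4 • v
  have key4 : b3 • (x4 - x0) = (x3 - x0) - a3 • (x2 - x0) := by
    calc b3 • (x4 - x0)
        = ((a3 • x2 + b3 • x4) - x0 - a3 • (x2 - x0)) - (a3 + b3 - 1) • x0 := by
          rw [smul_sub, smul_sub, sub_smul, add_smul, one_smul]; abel
      _ = (x3 - x0) - a3 • (x2 - x0) := by rw [hc3, hab3, sub_self, zero_smul, sub_zero]
  set t4 : ℝ := b3⁻¹ * (t3 - a3 * t2) with ht4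
  have hx4v : x4 - x0 = t4 • v := by
    have h5 : b3 • (x4 - x0) = (t3 - a3 * t2) • v := by
      rw [key4, hx2v, hx3v, smul_smul, sub_smul]
    have := congrArg (fun w => b3⁻¹ • w) h5
    simpa [ht4, smul_smul, inv_smul_smul₀ (ne_of_gt hb3pos)] using this
  have hb3t4 : b3 * t4 = t3 - a3 * t2 := by
    rw [ht4, ← mul_assoc, mul_inv_cancel₀ (ne_of_gt hb3pos), one_mul]
  have ht4t2 : t2 < t4 := by
    have h3a : b3 * (t4 - t2) = t3 - t2 := by linear_combination hb3t4 - t2 * hab3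
    by_contra hcon
    push_neg at hcon
    have : b3 * (t4 - t2) ≤ 0 :=
      mul_nonpos_of_nonneg_of_nonpos (le_of_lt hb3pos) (by linarith)
    linarith
  have ht4t3 : t3 < t4 := by
    have h3b : t4 - t3 = a3 * (t4 - t2) := by linear_combination hb3t4 - t4 * hab3
    have := mul_pos ha3pos (by linarith : (0:ℝ) < t4 - t2)
    linarith
  -- final step : x4 = a4 • x3 + b4 • x0 gives t4 = a4 * t3 ≤ t3
  have key5 : x4 - x0 = a4 • (x3 - x0) := by
    calc x4 - x0 = (a4 • x3 + b4 • x0) - x0 := by rw [hc4]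
      _ = a4 • (x3 - x0) + (a4 + b4 - 1) • x0 := by
          rw [smul_sub, sub_smul, add_smul, one_smul]; abel
      _ = a4 • (x3 - x0) := by rw [hab4, sub_self, zero_smul, add_zero]
  have h6 : t4 • v = (a4 * t3) • v := by
    rw [← hx4v, key5, hx3v, smul_smul]
  have h7 : t4 = a4 * t3 := by
    have h8 : (t4 - a4 * t3) • v = 0 := by rw [sub_smul, h6, sub_self]
    rcases smul_eq_zero.mp h8 with h | h
    · linarith [h]
    · exact absurd h hvne
  have ha4le : a4 ≤ 1 := by linarith
  have : a4 * t3 ≤ 1 * t3 := mul_le_mul_of_nonneg_right ha4le (by linarith)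
  linarith

end Main


/-- The code `D₁` has no closed convex realization in any dimension `d ≥ 1`. -/
theorem stmt4 : ∀ d : ℕ, 1 ≤ d →
    ¬ ∃ U : Fin 5 → Set (EuclideanSpace ℝ (Fin d)),
        (∀ i, Convex ℝ (U i)) ∧ (∀ i, IsClosed (U i)) ∧ codeOf U = D1 := by
  intro d _ ⟨U, hconv, hclosed, hcode⟩
  exact no_closed_realization U hconv hclosed hcode
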